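/- arXiv:2412.00212 — 2 statements merged into one kernel-verified Lean document; each statement's English description precedes it below -/
import Mathlib

section
/- Monotonicity of construction costs under subgraphs: if H is a subgraph of a finite simple graph G, then ν_*(H) ≤ ν_*(G); and if moreover H is a spanning subgraph of G (H has the same vertex set as G and every edge of H is an edge of G), then ν*(H) ≤ ν*(G). -/
namespace ConsCost

variable {V : Type*} [Fintype V]

/-- The number of elements (vertices plus edges) of a graph. -/
noncomputable def numElts (G : SimpleGraph V) : ℕ :=
  Fintype.card V + Nat.card G.edgeSet

/-- `x` is a construction sequence for `G`: a bijective listing of the vertices and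
edges of `G` in which every edge appears after both of its endpoints. -/
def IsCSeq (G : SimpleGraph V) (x : Fin (numElts G) ≃ V ⊕ G.edgeSet) : Prop :=
  ∀ (e : G.edgeSet), ∀ v ∈ (e : Sym2 V), x.symm (Sum.inl v) < x.symm (Sum.inr e)

/-- The cost `ν(e,x) = (x⁻¹e − x⁻¹u) + (x⁻¹e − x⁻¹w)` of an edge `e = uw`
in the construction sequence `x`. -/
noncomputable def edgeCost (G : SimpleGraph V) (x : Fin (numElts G) ≃ V ⊕ G.edgeSet)
    (e : G.edgeSet) : ℕ :=
  2 * (x.symm (Sum.inr e) : ℕ) -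
    Sym2.lift ⟨fun u w => ((x.symm (Sum.inl u) : ℕ) + (x.symm (Sum.inl w) : ℕ)),
      fun u w => by dsimp only; omega⟩ (e : Sym2 V)

/-- The cost `ν(x)` of a construction sequence: the sum of the costs of all edges. -/
noncomputable def cost (G : SimpleGraph V) (x : Fin (numElts G) ≃ V ⊕ G.edgeSet) : ℕ :=
  ∑ᶠ e : G.edgeSet, edgeCost G x e

/-- The maximum construction cost `ν*(G)`. -/
noncomputable def maxCost (G : SimpleGraph V) : ℕ :=
  sSup {c | ∃ x, IsCSeq G x ∧ cost G x = c}

/-- The minimum construction cost `ν_*(G)`. -/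
noncomputable def minCost (G : SimpleGraph V) : ℕ :=
  sInf {c | ∃ x, IsCSeq G x ∧ cost G x = c}
open Function in
lemma strictMono_gap {m n : ℕ} {g : Fin m → Fin n} (hg : StrictMono g) :
    ∀ k : ℕ, ∀ i j : Fin m, (j : ℕ) = (i : ℕ) + k → (g i : ℕ) + k ≤ (g j : ℕ) := by
  intro k
  induction k with
  | zero => intro i j h; have : i = j := Fin.ext (by omega); simp [this]
  | succ k ih =>
    intro i j h
    have hj : (i : ℕ) + k < m := by omega
    set j' : Fin m := ⟨(i : ℕ) + k, hj⟩ with hj'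
    have h1 : (g i : ℕ) + k ≤ (g j' : ℕ) := ih i j' rfl
    have h2 : g j' < g j := hg (by simp [Fin.lt_def, hj']; omega)
    have := Fin.lt_def.mp h2
    omega

lemma rank_equiv {α : Type*} [Fintype α] {n m : ℕ} (f : α → Fin n)
    (hf : Function.Injective f) (hm : Fintype.card α = m) :
    ∃ e : Fin m ≃ α, ∀ a b : α, e.symm a < e.symm b ↔ f a < f b := by
  classical
  set S : Finset (Fin n) := Finset.univ.image f with hS
  have hcard : S.card = m := by
    rw [hS, Finset.card_image_of_injective _ hf, Finset.card_univ, hm]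
  have hrange : (S : Set (Fin n)) = Set.range f := by
    ext z; simp [hS]
  refine ⟨(S.orderIsoOfFin hcard).toEquiv.trans
    ((Equiv.setCongr hrange).trans (Equiv.ofInjective f hf).symm), ?_⟩
  intro a b
  have key : ∀ c : α,
      ((S.orderIsoOfFin hcard).toEquiv.trans
        ((Equiv.setCongr hrange).trans (Equiv.ofInjective f hf).symm)).symm c
        = (S.orderIsoOfFin hcard).symm ⟨f c, by simp [hS]⟩ := by
    intro c
    simp [Equiv.symm_trans_apply]
    congr 1
  rw [key a, key b]
  rw [(S.orderIsoOfFin hcard).symm.lt_iff_lt]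
  simp [Subtype.mk_lt_mk]


lemma cost_eq_sum (G : SimpleGraph V) [Fintype G.edgeSet]
    (x : Fin (numElts G) ≃ V ⊕ G.edgeSet) :
    cost G x = ∑ e : G.edgeSet, edgeCost G x e :=
  finsum_eq_sum_of_fintype _

lemma numElts_eq (G : SimpleGraph V) [Fintype G.edgeSet] :
    numElts G = Fintype.card V + Fintype.card G.edgeSet := by
  rw [numElts, Nat.card_eq_fintype_card]

lemma exists_cseq (G : SimpleGraph V) : ∃ x, IsCSeq G x := by
  classical
  haveI : Fintype G.edgeSet := (Set.toFinite _).fintype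
  set a := Fintype.card V
  set b := Fintype.card G.edgeSet
  have hcard : numElts G = a + b := numElts_eq G
  refine ⟨(finCongr hcard).trans (finSumFinEquiv.symm.trans
    (Equiv.sumCongr (Fintype.equivFin V).symm (Fintype.equivFin G.edgeSet).symm)), ?_⟩
  intro e v _
  simp only [Equiv.symm_trans_apply, Equiv.sumCongr_symm, Equiv.sumCongr_apply,
    Equiv.symm_symm, Sum.map_inl, Sum.map_inr]
  rw [Fin.lt_def]
  simp [finSumFinEquiv_apply_left, finSumFinEquiv_apply_right]
  have := (Fintype.equivFin V v).isLt
  omega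


lemma min_step (G : SimpleGraph V) (H : G.Subgraph) [Fintype ↥H.verts]
    (x : Fin (numElts G) ≃ V ⊕ G.edgeSet) (hx : IsCSeq G x) :
    ∃ y, IsCSeq H.coe y ∧ cost H.coe y ≤ cost G x := by
  classical
  haveI : Fintype G.edgeSet := (Set.toFinite _).fintype
  haveI : Fintype H.coe.edgeSet := (Set.toFinite _).fintype
  set φ : H.coe.edgeSet → G.edgeSet := fun e =>
    ⟨Sym2.map Subtype.val (e : Sym2 ↥H.verts), H.edgeSet_subset (by
      rw [← H.image_coe_edgeSet_coe]; exact Set.mem_image_of_mem _ e.2)⟩ with hφ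
  have hφinj : Function.Injective φ := fun e1 e2 h =>
    Subtype.ext (Sym2.map.injective Subtype.val_injective (congrArg Subtype.val h))
  set ι : ↥H.verts ⊕ H.coe.edgeSet → V ⊕ G.edgeSet := Sum.map Subtype.val φ with hι
  have hιinj : Function.Injective ι :=
    Function.Injective.sumMap Subtype.val_injective hφinj
  set f : ↥H.verts ⊕ H.coe.edgeSet → Fin (numElts G) := fun a => x.symm (ι a) with hf
  have hfinj : Function.Injective f := x.symm.injective.comp hιinj
  have hcard : Fintype.card (↥H.verts ⊕ H.coe.edgeSet) = numElts H.coe := by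
    simp [numElts, Nat.card_eq_fintype_card]
  obtain ⟨y, hy⟩ := rank_equiv f hfinj hcard
  have hmem : ∀ (e : H.coe.edgeSet) (v : ↥H.verts), v ∈ (e : Sym2 ↥H.verts) →
      (v : V) ∈ ((φ e : G.edgeSet) : Sym2 V) :=
    fun e v hv => Sym2.mem_map.mpr ⟨v, hv, rfl⟩
  have hyc : IsCSeq H.coe y := by
    intro e v hv
    exact (hy (Sum.inl v) (Sum.inr e)).mpr (hx (φ e) (v : V) (hmem e v hv))
  refine ⟨y, hyc, ?_⟩
  -- strict monotonicity of f ∘ y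
  have hg : StrictMono (fun i => f (y i)) := by
    intro i j hij
    have h := hy (y i) (y j)
    rw [y.symm_apply_apply, y.symm_apply_apply] at h
    exact h.mp hij
  have gap : ∀ a b, y.symm a < y.symm b →
      (y.symm b : ℕ) - (y.symm a : ℕ) ≤ (f b : ℕ) - (f a : ℕ) := by
    intro a b hab
    have h1 := strictMono_gap hg ((y.symm b : ℕ) - (y.symm a : ℕ))
      (y.symm a) (y.symm b) (by rw [Fin.lt_def] at hab; omega)
    simp only [y.apply_symm_apply] at h1
    have h2 : f a < f b := (hy a b).mp hab
    rw [Fin.lt_def] at h2 hab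
    omega
  have hterm : ∀ e : H.coe.edgeSet, edgeCost H.coe y e ≤ edgeCost G x (φ e) := by
    rintro ⟨s, hs⟩
    revert hs
    induction s using Sym2.ind with
    | _ u w =>
      intro hs
      set E : H.coe.edgeSet := ⟨s(u, w), hs⟩ with hE
      have hmu : u ∈ (E : Sym2 ↥H.verts) := Sym2.mem_mk_left u w
      have hmw : w ∈ (E : Sym2 ↥H.verts) := Sym2.mem_mk_right u w
      have hu : y.symm (Sum.inl u) < y.symm (Sum.inr E) := hyc E u hmu
      have hw : y.symm (Sum.inl w) < y.symm (Sum.inr E) := hyc E w hmw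
      have gu := gap (Sum.inl u) (Sum.inr E) hu
      have gw := gap (Sum.inl w) (Sum.inr E) hw
      have HU : x.symm (Sum.inl (u : V)) < x.symm (Sum.inr (φ E)) :=
        hx (φ E) (u : V) (hmem E u hmu)
      have HW : x.symm (Sum.inl (w : V)) < x.symm (Sum.inr (φ E)) :=
        hx (φ E) (w : V) (hmem E w hmw)
      have hco : ((φ E : G.edgeSet) : Sym2 V) = s((u : V), (w : V)) :=
        Sym2.map_pair_eq _ _ _
      have HU' : (f (Sum.inl u) : ℕ) < (f (Sum.inr E) : ℕ) := Fin.lt_def.mp HU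
      have HW' : (f (Sum.inl w) : ℕ) < (f (Sum.inr E) : ℕ) := Fin.lt_def.mp HW
      rw [Fin.lt_def] at hu hw
      simp only [edgeCost, Sym2.lift_mk]
      rw [hco, Sym2.lift_mk]
      show 2 * (y.symm (Sum.inr E) : ℕ) -
          ((y.symm (Sum.inl u) : ℕ) + (y.symm (Sum.inl w) : ℕ)) ≤
        2 * (f (Sum.inr E) : ℕ) - ((f (Sum.inl u) : ℕ) + (f (Sum.inl w) : ℕ))
      omega
  calc cost H.coe y = ∑ e : H.coe.edgeSet, edgeCost H.coe y e := cost_eq_sum _ _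
    _ ≤ ∑ e : H.coe.edgeSet, edgeCost G x (φ e) :=
        Finset.sum_le_sum (fun e _ => hterm e)
    _ = ∑ e ∈ Finset.univ.image φ, edgeCost G x e :=
        (Finset.sum_image (fun a _ b _ h => hφinj h)).symm
    _ ≤ ∑ e : G.edgeSet, edgeCost G x e :=
        Finset.sum_le_sum_of_subset (Finset.subset_univ _)
    _ = cost G x := (cost_eq_sum _ _).symm


lemma max_step (G : SimpleGraph V) (H : G.Subgraph) [Fintype ↥H.verts]
    (hspan : H.verts = Set.univ)
    (y : Fin (numElts H.coe) ≃ ↥H.verts ⊕ H.coe.edgeSet) (hyc : IsCSeq H.coe y) :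
    ∃ x, IsCSeq G x ∧ cost H.coe y ≤ cost G x := by
  classical
  haveI : Fintype G.edgeSet := (Set.toFinite _).fintype
  haveI : Fintype H.coe.edgeSet := (Set.toFinite _).fintype
  set p : G.edgeSet → Prop := fun e => (e : Sym2 V) ∈ H.edgeSet with hp
  have hFmem : ∀ e : H.coe.edgeSet,
      Sym2.map Subtype.val (e : Sym2 ↥H.verts) ∈ H.edgeSet := by
    intro e
    rw [← H.image_coe_edgeSet_coe]
    exact Set.mem_image_of_mem _ e.2
  set F : H.coe.edgeSet → {e : G.edgeSet // p e} := fun e =>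
    ⟨⟨Sym2.map Subtype.val (e : Sym2 ↥H.verts), H.edgeSet_subset (hFmem e)⟩, hFmem e⟩ with hF
  have hFbij : Function.Bijective F := by
    constructor
    · intro e1 e2 h
      exact Subtype.ext (Sym2.map.injective Subtype.val_injective
        (congrArg (fun z => z.val.val) h))
    · rintro ⟨⟨s, hsG⟩, hsH⟩
      have hsH' : s ∈ H.edgeSet := hsH
      rw [← H.image_coe_edgeSet_coe] at hsH'
      obtain ⟨t, htH, hts⟩ := hsH'
      exact ⟨⟨t, htH⟩, Subtype.ext (Subtype.ext hts)⟩
  set ψ : H.coe.edgeSet ≃ {e : G.edgeSet // p e} := Equiv.ofBijective F hFbij with hψ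
  set e_V : V ≃ ↥H.verts := (Equiv.Set.univ V).symm.trans (Equiv.setCongr hspan.symm)
    with he_V
  have he_Vval : ∀ v : V, ((e_V v : ↥H.verts) : V) = v := fun v => rfl
  set k := Fintype.card {e : G.edgeSet // ¬ p e} with hk
  set e_A : Fin k ≃ {e : G.edgeSet // ¬ p e} := (Fintype.equivFin _).symm with he_A
  have hcard : numElts G = numElts H.coe + k := by
    have h1 : Fintype.card G.edgeSet = Fintype.card {e : G.edgeSet // p e} + k := by
      rw [hk, ← Fintype.card_sum]
      exact Fintype.card_congr (Equiv.sumCompl p).symm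
    have h2 : Fintype.card V = Fintype.card ↥H.verts := Fintype.card_congr e_V
    have h3 : Fintype.card {e : G.edgeSet // p e} = Fintype.card H.coe.edgeSet :=
      Fintype.card_congr ψ.symm
    conv_lhs => rw [numElts]
    conv_rhs => rw [numElts]
    rw [ Nat.card_eq_fintype_card, Nat.card_eq_fintype_card,
      h1, h2, h3]
    omega
  set x : Fin (numElts G) ≃ V ⊕ G.edgeSet :=
    (finCongr hcard).trans
      (finSumFinEquiv.symm.trans
        ((Equiv.sumCongr (y.trans (Equiv.sumCongr e_V.symm ψ)) e_A).trans
          ((Equiv.sumAssoc V {e : G.edgeSet // p e} {e : G.edgeSet // ¬ p e}).trans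
            (Equiv.sumCongr (Equiv.refl V) (Equiv.sumCompl p))))) with hx
  have P1 : ∀ v : V, (x.symm (Sum.inl v) : ℕ) = (y.symm (Sum.inl (e_V v)) : ℕ) := by
    intro v
    simp [hx, Equiv.symm_trans_apply]
  have P2 : ∀ (e : G.edgeSet) (he : p e),
      (x.symm (Sum.inr e) : ℕ) = (y.symm (Sum.inr (ψ.symm ⟨e, he⟩)) : ℕ) := by
    intro e he
    simp [hx, Equiv.symm_trans_apply, Equiv.sumCompl_symm_apply_of_pos he]
  have P3 : ∀ (e : G.edgeSet), ¬ p e → numElts H.coe ≤ (x.symm (Sum.inr e) : ℕ) := by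
    intro e he
    simp [hx, Equiv.symm_trans_apply, Equiv.sumCompl_symm_apply_of_neg he]
  have hxc : IsCSeq G x := by
    intro e v hv
    rw [Fin.lt_def]
    by_cases he : p e
    · rw [P1 v, P2 e he]
      set e' : H.coe.edgeSet := ψ.symm ⟨e, he⟩ with he'
      have hco : (e : Sym2 V) = Sym2.map Subtype.val (e' : Sym2 ↥H.verts) := by
        have h1 : ψ e' = ⟨e, he⟩ := Equiv.apply_symm_apply ψ ⟨e, he⟩
        have h2 : ((ψ e' : {e : G.edgeSet // p e}) : G.edgeSet)
            = (⟨Sym2.map Subtype.val (e' : Sym2 ↥H.verts),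
                H.edgeSet_subset (hFmem e')⟩ : G.edgeSet) := rfl
        rw [h1] at h2
        exact congrArg Subtype.val h2
    -- v ∈ e
      rw [hco] at hv
      obtain ⟨v', hv', rfl⟩ := Sym2.mem_map.mp hv
      have hev : e_V (v' : V) = v' := Subtype.ext (he_Vval (v' : V))
      rw [hev]
      exact Fin.lt_def.mp (hyc e' v' hv')
    · have h1 := P3 e he
      have h2 : (y.symm (Sum.inl (e_V v))).val < numElts H.coe :=
        (y.symm (Sum.inl (e_V v))).isLt
      rw [P1 v]
      omega
  have hterm : ∀ e' : H.coe.edgeSet,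
      edgeCost G x ((ψ e' : {e : G.edgeSet // p e}) : G.edgeSet) = edgeCost H.coe y e' := by
    rintro ⟨s, hs⟩
    revert hs
    induction s using Sym2.ind with
    | _ u w =>
      intro hs
      set E : H.coe.edgeSet := ⟨s(u, w), hs⟩ with hE
      have hval : (((ψ E : {e : G.edgeSet // p e}) : G.edgeSet) : Sym2 V)
          = s((u : V), (w : V)) := Sym2.map_pair_eq _ _ _
      have hψE : ψ.symm ⟨((ψ E : {e : G.edgeSet // p e}) : G.edgeSet), (ψ E).2⟩ = E :=
        ψ.symm_apply_apply E
      have hpos : (x.symm (Sum.inr ((ψ E : {e : G.edgeSet // p e}) : G.edgeSet)) : ℕ)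
          = (y.symm (Sum.inr E) : ℕ) := by
        rw [P2 _ (ψ E).2, hψE]
      have hevu : e_V (u : V) = u := Subtype.ext (he_Vval (u : V))
      have hevw : e_V (w : V) = w := Subtype.ext (he_Vval (w : V))
      have hu : (x.symm (Sum.inl (u : V)) : ℕ) = (y.symm (Sum.inl u) : ℕ) := by
        rw [P1, hevu]
      have hw : (x.symm (Sum.inl (w : V)) : ℕ) = (y.symm (Sum.inl w) : ℕ) := by
        rw [P1, hevw]
      simp only [edgeCost, hval, Sym2.lift_mk]
      rw [hpos, hu, hw]
      rfl
  refine ⟨x, hxc, ?_⟩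
  have hsum1 : ∑ e : G.edgeSet, edgeCost G x e
      = (∑ s : {e : G.edgeSet // p e}, edgeCost G x s.val)
        + ∑ a : {e : G.edgeSet // ¬ p e}, edgeCost G x a.val := by
    rw [← Equiv.sum_comp (Equiv.sumCompl p) (edgeCost G x), Fintype.sum_sum_type]
    rfl
  have hsum2 : ∑ s : {e : G.edgeSet // p e}, edgeCost G x s.val
      = ∑ e' : H.coe.edgeSet, edgeCost H.coe y e' := by
    rw [← Equiv.sum_comp ψ (fun s : {e : G.edgeSet // p e} => edgeCost G x s.val)]
    exact Finset.sum_congr rfl (fun e' _ => hterm e')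
  rw [cost_eq_sum, cost_eq_sum, hsum1, ← hsum2]
  exact Nat.le_add_right _ _


/-- Monotonicity of construction costs under subgraphs: `ν_*(H) ≤ ν_*(G)` for any
subgraph `H` of `G`, and `ν*(H) ≤ ν*(G)` when `H` is a spanning subgraph. -/
theorem cost_mono_of_subgraph {V : Type*} [Fintype V] (G : SimpleGraph V)
    (H : G.Subgraph) [Fintype ↥H.verts] :
    minCost H.coe ≤ minCost G ∧
      (H.verts = Set.univ → maxCost H.coe ≤ maxCost G) := by
  classical
  constructor
  · obtain ⟨x0, hx0⟩ := exists_cseq G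
    have hne : {c | ∃ x, IsCSeq G x ∧ cost G x = c}.Nonempty := ⟨cost G x0, x0, hx0, rfl⟩
    obtain ⟨x, hx, hcx⟩ := Nat.sInf_mem hne
    obtain ⟨y, hy, hle⟩ := min_step G H x hx
    calc minCost H.coe ≤ cost H.coe y := Nat.sInf_le ⟨y, hy, rfl⟩
      _ ≤ cost G x := hle
      _ = minCost G := hcx
  · intro hspan
    have hfinH : {c | ∃ y, IsCSeq H.coe y ∧ cost H.coe y = c}.Finite := by
      apply Set.Finite.subset (Set.finite_range (cost H.coe))
      rintro c ⟨y, _, rfl⟩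
      exact ⟨y, rfl⟩
    have hfinG : {c | ∃ x, IsCSeq G x ∧ cost G x = c}.Finite := by
      apply Set.Finite.subset (Set.finite_range (cost G))
      rintro c ⟨x, _, rfl⟩
      exact ⟨x, rfl⟩
    obtain ⟨y0, hy0⟩ := exists_cseq H.coe
    have hne : {c | ∃ y, IsCSeq H.coe y ∧ cost H.coe y = c}.Nonempty :=
      ⟨cost H.coe y0, y0, hy0, rfl⟩
    obtain ⟨y, hy, hcy⟩ := Nat.sSup_mem hne hfinH.bddAbove
    obtain ⟨x, hx, hle⟩ := max_step G H hspan y hy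
    calc maxCost H.coe = cost H.coe y := hcy.symm
      _ ≤ cost G x := hle
      _ ≤ maxCost G := le_csSup hfinG.bddAbove ⟨x, hx, rfl⟩

end ConsCost
end

section
/- The maximum construction cost of the star K_{1,n} is ν*(K_{1,n}) = (5n² + n)/2 for all n ≥ 2. -/
namespace ConsCost

variable {V : Type*} [Fintype V]

/-- The star `K_{1,n}`: hub `0`, peripheral vertices `1, …, n`, and an edge from the
hub to each peripheral vertex. -/
def starGraph (n : ℕ) : SimpleGraph (Fin (n + 1)) :=
  SimpleGraph.fromRel (fun u _ => u = 0)

/-! ### Auxiliary lemmas -/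

/-- The sum of a finset of naturals is at least `0 + 1 + ⋯ + (card − 1)`. -/
lemma sum_range_card_le (s : Finset ℕ) : ∑ i ∈ Finset.range s.card, i ≤ ∑ i ∈ s, i := by
  classical
  set k := s.card with hk
  let f : Fin k ≃o {x // x ∈ s} := s.orderIsoOfFin hk.symm
  have hmono : StrictMono (fun i : Fin k => ((f i : ℕ))) := by
    intro a b hab
    exact f.strictMono hab
  have key : ∀ m : ℕ, ∀ hv : m < k, m ≤ ((f ⟨m, hv⟩ : ℕ)) := by
    intro m
    induction m with
    | zero => intro hv; exact Nat.zero_le _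
    | succ p ih =>
      intro hv
      have hp : p < k := by omega
      have h1 : (⟨p, hp⟩ : Fin k) < ⟨p + 1, hv⟩ := by simp [Fin.lt_def]
      have h2 := hmono h1
      have h3 := ih hp
      simp only at h2
      omega
  calc ∑ i ∈ Finset.range k, i = ∑ i : Fin k, (i : ℕ) :=
        (Fin.sum_univ_eq_sum_range (fun i => i) k).symm
    _ ≤ ∑ i : Fin k, ((f i : ℕ)) := Finset.sum_le_sum (fun i _ => key i.1 i.2)
    _ = ∑ i : {x // x ∈ s}, (i : ℕ) := Equiv.sum_comp f.toEquiv _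
    _ = ∑ i ∈ s, i := Finset.sum_coe_sort s (fun i => i)

lemma starGraph_adj {n : ℕ} {u v : Fin (n + 1)} :
    (starGraph n).Adj u v ↔ u ≠ v ∧ (u = 0 ∨ v = 0) := by
  simp [starGraph, SimpleGraph.fromRel_adj]

/-- The function sending a peripheral index to the corresponding edge of the star. -/
def starEquivFun (n : ℕ) (j : Fin n) : (starGraph n).edgeSet :=
  ⟨s(0, j.succ), by
    rw [SimpleGraph.mem_edgeSet, starGraph_adj]
    exact ⟨(Fin.succ_ne_zero j).symm, Or.inl rfl⟩⟩

lemma starEquivFun_bij (n : ℕ) : Function.Bijective (starEquivFun n) := by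
  constructor
  · intro a b hab
    have h : s((0 : Fin (n + 1)), a.succ) = s((0 : Fin (n + 1)), b.succ) :=
      congrArg Subtype.val hab
    exact Fin.succ_injective n (Sym2.congr_right.mp h)
  · rintro ⟨e, he⟩
    induction e using Sym2.ind with
    | _ u v =>
      rw [SimpleGraph.mem_edgeSet, starGraph_adj] at he
      obtain ⟨hne, h0⟩ := he
      rcases h0 with rfl | rfl
      · refine ⟨v.pred (Ne.symm hne), ?_⟩
        apply Subtype.ext
        simp [starEquivFun, Fin.succ_pred]
      · refine ⟨u.pred hne, ?_⟩
        apply Subtype.ext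
        simp only [starEquivFun, Fin.succ_pred]
        exact Sym2.eq_swap

/-- The edges of the star are in bijection with the peripheral vertices. -/
noncomputable def starEquiv (n : ℕ) : Fin n ≃ (starGraph n).edgeSet :=
  Equiv.ofBijective _ (starEquivFun_bij n)

lemma starEquiv_coe (n : ℕ) (j : Fin n) :
    ((starEquiv n j : (starGraph n).edgeSet) : Sym2 (Fin (n + 1))) = s(0, j.succ) := rfl

noncomputable instance (n : ℕ) : Fintype ((starGraph n).edgeSet) :=
  Fintype.ofEquiv _ (starEquiv n)

lemma numElts_star (n : ℕ) : numElts (starGraph n) = (n + 1) + n := by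
  rw [numElts, Nat.card_eq_of_equiv_fin (starEquiv n).symm, Fintype.card_fin]

lemma cost_eq (n : ℕ) (x : Fin (numElts (starGraph n)) ≃ Fin (n + 1) ⊕ (starGraph n).edgeSet) :
    cost (starGraph n) x = ∑ j : Fin n, edgeCost (starGraph n) x (starEquiv n j) := by
  rw [cost, finsum_eq_sum_of_fintype, ← Equiv.sum_comp (starEquiv n)]

lemma edgeCost_star (n : ℕ)
    (x : Fin (numElts (starGraph n)) ≃ Fin (n + 1) ⊕ (starGraph n).edgeSet) (j : Fin n) :
    edgeCost (starGraph n) x (starEquiv n j) =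
      2 * (x.symm (Sum.inr (starEquiv n j)) : ℕ) -
        ((x.symm (Sum.inl 0) : ℕ) + (x.symm (Sum.inl j.succ) : ℕ)) := by
  rw [edgeCost, starEquiv_coe, Sym2.lift_mk]

/-- Purely arithmetic part of the upper bound. -/
lemma arith_aux (n S h0 L T : ℕ) (hn : 2 ≤ n) (hA : n * h0 + L ≤ 2 * S)
    (hB : h0 + L + S = T) (hT2 : 2 * T = 4 * (n * n) + 2 * n)
    (hC : 2 * S + (n * n + n) ≤ 2 * T) :
    2 * (2 * S - (n * h0 + L)) ≤ 5 * n ^ 2 + n := by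
  have hu : h0 ≤ n * h0 := Nat.le_mul_of_pos_left h0 (by omega)
  have hgoal : 5 * n ^ 2 = 5 * (n * n) := by ring
  omega

/-- Every construction sequence of the star satisfies `2ν(x) ≤ 5n² + n`. -/
lemma two_cost_le (n : ℕ) (hn : 2 ≤ n)
    (x : Fin (numElts (starGraph n)) ≃ Fin (n + 1) ⊕ (starGraph n).edgeSet)
    (hx : IsCSeq (starGraph n) x) :
    2 * cost (starGraph n) x ≤ 5 * n ^ 2 + n := by
  classical
  -- termwise bound from the c-sequence property
  have hterm : ∀ j : Fin n, (x.symm (Sum.inl (0 : Fin (n + 1))) : ℕ)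
      + (x.symm (Sum.inl j.succ) : ℕ)
      ≤ 2 * (x.symm (Sum.inr (starEquiv n j)) : ℕ) := by
    intro j
    have h1 := hx (starEquiv n j) 0 (by rw [starEquiv_coe]; exact Sym2.mem_mk_left _ _)
    have h2 := hx (starEquiv n j) j.succ (by rw [starEquiv_coe]; exact Sym2.mem_mk_right _ _)
    rw [Fin.lt_def] at h1 h2
    omega
  -- cost formula
  have hcost : cost (starGraph n) x =
      2 * (∑ j : Fin n, (x.symm (Sum.inr (starEquiv n j)) : ℕ)) -
        (n * (x.symm (Sum.inl (0 : Fin (n + 1))) : ℕ) +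
          ∑ j : Fin n, (x.symm (Sum.inl j.succ) : ℕ)) := by
    rw [cost_eq]
    rw [Finset.sum_congr rfl (fun j _ => edgeCost_star n x j)]
    rw [Finset.sum_tsub_distrib Finset.univ (fun j _ => hterm j)]
    congr 1
    · rw [← Finset.mul_sum]
    · rw [Finset.sum_add_distrib, Finset.sum_const, Finset.card_univ, Fintype.card_fin,
        smul_eq_mul]
  have hA : n * (x.symm (Sum.inl (0 : Fin (n + 1))) : ℕ) +
      ∑ j : Fin n, (x.symm (Sum.inl j.succ) : ℕ)
      ≤ 2 * ∑ j : Fin n, (x.symm (Sum.inr (starEquiv n j)) : ℕ) := by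
    have h := Finset.sum_le_sum (fun j (_ : j ∈ Finset.univ) => hterm j)
    rw [Finset.sum_add_distrib, Finset.sum_const, Finset.card_univ, Fintype.card_fin,
      smul_eq_mul, ← Finset.mul_sum] at h
    exact h
  -- the total of all positions
  have hB : (x.symm (Sum.inl (0 : Fin (n + 1))) : ℕ) +
      (∑ j : Fin n, (x.symm (Sum.inl j.succ) : ℕ)) +
      (∑ j : Fin n, (x.symm (Sum.inr (starEquiv n j)) : ℕ))
      = ∑ k : Fin (numElts (starGraph n)), (k : ℕ) := by
    have h1 : ∑ z : Fin (n + 1) ⊕ (starGraph n).edgeSet, (x.symm z : ℕ)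
        = ∑ k : Fin (numElts (starGraph n)), (k : ℕ) := by
      rw [← Equiv.sum_comp x (fun z => (x.symm z : ℕ))]
      simp
    rw [Fintype.sum_sum_type] at h1
    rw [Fin.sum_univ_succ (fun v : Fin (n + 1) => (x.symm (Sum.inl v) : ℕ))] at h1
    rw [← Equiv.sum_comp (starEquiv n) (fun e => (x.symm (Sum.inr e) : ℕ))] at h1
    omega
  have hT2 : 2 * ∑ k : Fin (numElts (starGraph n)), (k : ℕ) = 4 * (n * n) + 2 * n := by
    have h1 : ∑ k : Fin (numElts (starGraph n)), (k : ℕ)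
        = ∑ i ∈ Finset.range (numElts (starGraph n)), i :=
      Fin.sum_univ_eq_sum_range (fun i => i) _
    have h2 := Finset.sum_range_id_mul_two ((n + 1) + n)
    rw [show (n + 1) + n - 1 = 2 * n by omega] at h2
    rw [show ((n + 1) + n) * (2 * n) = 4 * (n * n) + 2 * n by ring] at h2
    rw [h1, numElts_star]
    omega
  -- the distinct positions bound
  have hC : 2 * (∑ j : Fin n, (x.symm (Sum.inr (starEquiv n j)) : ℕ)) + (n * n + n)
      ≤ 2 * ∑ k : Fin (numElts (starGraph n)), (k : ℕ) := by
    set F : Fin n → ℕ := fun j => (x.symm (Sum.inr (starEquiv n j)) : ℕ) with hF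
    have hFinj : Function.Injective F := by
      intro a b hab
      have := Fin.val_injective hab
      exact (starEquiv n).injective (Sum.inr_injective (x.symm.injective this))
    have hcard : (Finset.image F Finset.univ).card = n := by
      rw [Finset.card_image_of_injective _ hFinj, Finset.card_univ, Fintype.card_fin]
    have hsub : Finset.image F Finset.univ ⊆ Finset.range ((n + 1) + n) := by
      intro i hi
      rw [Finset.mem_image] at hi
      obtain ⟨j, _, rfl⟩ := hi
      rw [Finset.mem_range]
      have h := (x.symm (Sum.inr (starEquiv n j))).2
      have h' := numElts_star n
      simp only [hF]
      omega
    have hsum_s : ∑ i ∈ Finset.image F Finset.univ, i = Finset.univ.sum F :=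
      Finset.sum_image (fun a _ b _ h => hFinj h)
    have hsdiff : ∑ i ∈ Finset.range ((n + 1) + n) \ Finset.image F Finset.univ, i
          + ∑ i ∈ Finset.image F Finset.univ, i
        = ∑ i ∈ Finset.range ((n + 1) + n), i := Finset.sum_sdiff hsub
    have hcard2 : (Finset.range ((n + 1) + n) \ Finset.image F Finset.univ).card = n + 1 := by
      rw [Finset.card_sdiff_of_subset hsub, Finset.card_range, hcard]
      omega
    have hlow := sum_range_card_le (Finset.range ((n + 1) + n) \ Finset.image F Finset.univ)
    rw [hcard2] at hlow
    have g1 := Finset.sum_range_id_mul_two (n + 1)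
    rw [show (n + 1) - 1 = n by omega] at g1
    rw [show (n + 1) * n = n * n + n by ring] at g1
    have g2 := Finset.sum_range_id_mul_two ((n + 1) + n)
    rw [show (n + 1) + n - 1 = 2 * n by omega] at g2
    rw [show ((n + 1) + n) * (2 * n) = 4 * (n * n) + 2 * n by ring] at g2
    have hT1 : ∑ k : Fin (numElts (starGraph n)), (k : ℕ)
        = ∑ i ∈ Finset.range (numElts (starGraph n)), i :=
      Fin.sum_univ_eq_sum_range (fun i => i) _
    rw [hT1, numElts_star]
    omega
  rw [hcost]
  exact arith_aux n _ _ _ _ hn hA hB hT2 hC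

/-- The optimal construction sequence for the star: hub first, then the peripheral
vertices, then all edges. -/
noncomputable def optSeq (n : ℕ) :
    Fin (numElts (starGraph n)) ≃ Fin (n + 1) ⊕ (starGraph n).edgeSet :=
  (finCongr (numElts_star n)).trans
    (finSumFinEquiv.symm.trans (Equiv.sumCongr (Equiv.refl (Fin (n + 1))) (starEquiv n)))

lemma optSeq_inl (n : ℕ) (v : Fin (n + 1)) :
    ((optSeq n).symm (Sum.inl v) : ℕ) = (v : ℕ) := by
  simp [optSeq]

lemma optSeq_inr (n : ℕ) (e : (starGraph n).edgeSet) :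
    ((optSeq n).symm (Sum.inr e) : ℕ) = (n + 1) + ((starEquiv n).symm e : ℕ) := by
  simp [optSeq]

lemma optSeq_isCSeq (n : ℕ) : IsCSeq (starGraph n) (optSeq n) := by
  intro e v hv
  obtain ⟨j, rfl⟩ := (starEquiv n).surjective e
  rw [starEquiv_coe, Sym2.mem_iff] at hv
  rw [Fin.lt_def]
  have h1 := optSeq_inl n v
  have h2 := optSeq_inr n (starEquiv n j)
  rw [Equiv.symm_apply_apply] at h2
  have hvn : (v : ℕ) ≤ n := by
    rcases hv with rfl | rfl
    · simp
    · have := j.2; simp [Fin.val_succ]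
  omega

lemma two_cost_optSeq (n : ℕ) : 2 * cost (starGraph n) (optSeq n) = 5 * n ^ 2 + n := by
  have hterm : ∀ j : Fin n, edgeCost (starGraph n) (optSeq n) (starEquiv n j)
      = 2 * n + 1 + (j : ℕ) := by
    intro j
    rw [edgeCost_star]
    have h0 := optSeq_inl n (0 : Fin (n + 1))
    have h1 := optSeq_inl n j.succ
    have h2 := optSeq_inr n (starEquiv n j)
    rw [Equiv.symm_apply_apply] at h2
    rw [h0, h1, h2]
    simp only [Fin.val_zero, Fin.val_succ]
    omega
  rw [cost_eq, Finset.sum_congr rfl (fun j _ => hterm j)]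
  rw [Finset.sum_add_distrib, Finset.sum_const, Finset.card_univ, Fintype.card_fin,
    smul_eq_mul]
  have hfin : ∑ x : Fin n, (x : ℕ) = ∑ i ∈ Finset.range n, i :=
    Fin.sum_univ_eq_sum_range (fun i => i) n
  rw [hfin]
  have g := Finset.sum_range_id_mul_two n
  have hns : n * (n - 1) + n = n * n := by
    rcases Nat.eq_zero_or_pos n with rfl | hpos
    · simp
    · have h1 : n - 1 + 1 = n := by omega
      calc n * (n - 1) + n = n * ((n - 1) + 1) := by ring
        _ = n * n := by rw [h1]
  have hl1 : n * (2 * n + 1) = 2 * (n * n) + n := by ring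
  have hl2 : 5 * n ^ 2 = 5 * (n * n) := by ring
  omega

/-- `ν*(K_{1,n}) = (5n² + n)/2` for `n ≥ 2`. -/
theorem maxCost_star (n : ℕ) (hn : 2 ≤ n) :
    2 * maxCost (starGraph n) = 5 * n ^ 2 + n := by
  classical
  set Set₀ : Set ℕ := {c | ∃ x, IsCSeq (starGraph n) x ∧ cost (starGraph n) x = c} with hSet
  have hmem : cost (starGraph n) (optSeq n) ∈ Set₀ := ⟨optSeq n, optSeq_isCSeq n, rfl⟩
  have hub : ∀ b ∈ Set₀, b ≤ cost (starGraph n) (optSeq n) := by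
    rintro b ⟨x, hx, rfl⟩
    have h1 := two_cost_le n hn x hx
    have h2 := two_cost_optSeq n
    omega
  have : maxCost (starGraph n) = cost (starGraph n) (optSeq n) := by
    rw [maxCost]
    exact le_antisymm (csSup_le ⟨_, hmem⟩ hub) (le_csSup ⟨_, hub⟩ hmem)
  rw [this, two_cost_optSeq]

end ConsCost
end
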